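/- Let a, b ∈ ℝ and define h(z) = (b + (1 + a - b + ab)z - ab z²)/(1 - z)². For z = e^{iθ} with -π < θ < π, θ ≠ 0, writing h(e^{iθ}) = u(θ) + i v(θ), one has u(θ) = ((1 + a - b + ab) + (1 - a)b cos θ)/(2(cos θ - 1)) and v(θ) = (1 + a)b sin θ/(2(1 - cos θ)), and these satisfy the parabola equation v² = -b²(1+a)·(u - (2b(1-a) - (a+1))/4). -/

import Mathlib

open Complex

theorem stmt_7 (a b : ℝ) (ha : 0 < 1 + a)
    (h : ℂ → ℂ)
    (hh : h = fun z => ((b : ℂ) + ((1 : ℂ) + a - b + a * b) * z - (a : ℂ) * b * z ^ 2)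
        / (1 - z) ^ 2) :
    ∀ θ ∈ Set.Ioo (-Real.pi) Real.pi, θ ≠ 0 →
      ∀ u v : ℝ,
        u = ((1 + a - b + a * b) + (1 - a) * b * Real.cos θ) / (2 * (Real.cos θ - 1)) →
        v = (1 + a) * b * Real.sin θ / (2 * (1 - Real.cos θ)) →
        (h (Complex.exp ((θ : ℂ) * Complex.I))).re = u ∧
        (h (Complex.exp ((θ : ℂ) * Complex.I))).im = v ∧
        v ^ 2 = -(b ^ 2) * (1 + a) * (u - (2 * b * (1 - a) - (a + 1)) / 4) := by
  intro θ hθ hθ0 u v hu hv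
  have hc : Real.cos θ ≠ 1 := by
    intro h1
    have := (Real.cos_eq_one_iff_of_lt_of_lt (by nlinarith [hθ.1, Real.pi_pos])
      (by nlinarith [hθ.2, Real.pi_pos])).mp h1
    exact hθ0 this
  have hs2 : Real.sin θ ^ 2 = 1 - Real.cos θ ^ 2 := by
    nlinarith [Real.sin_sq_add_cos_sq θ]
  have hs2c : (Real.sin θ : ℂ) ^ 2 = 1 - (Real.cos θ : ℂ) ^ 2 := by exact_mod_cast hs2
  have hz : Complex.exp ((θ : ℂ) * Complex.I)
      = (Real.cos θ : ℂ) + (Real.sin θ : ℂ) * Complex.I := by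
    rw [Complex.exp_mul_I, Complex.ofReal_cos, Complex.ofReal_sin]
  set cθ : ℂ := (Real.cos θ : ℂ) with hcθ
  set sθ : ℂ := (Real.sin θ : ℂ) with hsθ
  have hden : (1 : ℂ) - (cθ + sθ * Complex.I) ≠ 0 := by
    intro h0
    apply hc
    have := congrArg Complex.re h0
    simp [hcθ, hsθ, Complex.cos_ofReal_re] at this
    linarith
  have h1R : (2 : ℝ) * (Real.cos θ - 1) ≠ 0 := by
    intro h0; apply hc; linarith
  have h2R : (2 : ℝ) * (1 - Real.cos θ) ≠ 0 := by
    intro h0; apply hc; linarith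
  have hcne : cθ ≠ 1 := fun h0 => hc (by rw [hcθ] at h0; exact_mod_cast h0)
  have htwo : (2 : ℂ) * (cθ - 1) ≠ 0 :=
    mul_ne_zero two_ne_zero (sub_ne_zero.mpr hcne)
  have htwo2 : (2 : ℂ) * (1 - cθ) ≠ 0 :=
    mul_ne_zero two_ne_zero (sub_ne_zero.mpr (Ne.symm hcne))
  have claim : ((b : ℂ) + ((1 : ℂ) + a - b + a * b) * (cθ + sθ * Complex.I)
        - (a : ℂ) * b * (cθ + sθ * Complex.I) ^ 2) * (2 * (cθ - 1))
      = ((((1 : ℂ) + a - b + a * b) + (1 - (a : ℂ)) * b * cθ)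
          - ((1 + (a : ℂ)) * b * sθ) * Complex.I) * (1 - (cθ + sθ * Complex.I)) ^ 2 := by
    linear_combination (-(sθ ^ 2) * ((1 + (a : ℂ)) * (1 + (b : ℂ) - b * sθ * Complex.I - b * cθ)))
        * Complex.I_sq
      + ((1 + (a : ℂ)) * (1 + (b : ℂ) - b * sθ * Complex.I - b * cθ)) * hs2c
  have step1 : (u : ℂ) + (v : ℂ) * Complex.I
      = ((((1 : ℂ) + a - b + a * b) + (1 - (a : ℂ)) * b * cθ)
          - ((1 + (a : ℂ)) * b * sθ) * Complex.I) / (2 * (cθ - 1)) := by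
    rw [eq_div_iff htwo, hu, hv]
    simp only [Complex.ofReal_div, Complex.ofReal_mul, Complex.ofReal_add,
      Complex.ofReal_sub, Complex.ofReal_one, Complex.ofReal_ofNat]
    rw [← hcθ, ← hsθ]
    field_simp
    ring
  have key : h (Complex.exp ((θ : ℂ) * Complex.I)) = (u : ℂ) + (v : ℂ) * Complex.I := by
    rw [hh]
    simp only
    rw [hz, step1, div_eq_div_iff (pow_ne_zero 2 hden) htwo]
    linear_combination claim
  refine ⟨?_, ?_, ?_⟩
  · rw [key]; simp
  · rw [key]; simp
  · rw [hu, hv]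
    have h1 : Real.cos θ - 1 ≠ 0 := by intro h0; apply hc; linarith
    have h2 : (1 : ℝ) - Real.cos θ ≠ 0 := by intro h0; apply hc; linarith
    field_simp
    linear_combination 4 * b ^ 2 * (Real.cos θ - 1) * (1 + a) * hs2
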